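/- Fix a real θ>0, a real λ with 0<λ≤1/(1+√θ)², an integer B≥1, and a prior variance V∈(0,1]. Define F∞(t,S_M) := V/(1+V·t·S_M) + λ·t·(1+θ·S_M) for integers t≥0 and reals S_M≥0. (i) If V > v_th∞(λ), then the pair (1, 1/√(λθ) − 1/V) is a global minimizer of F∞ over {0,1,…,B}×[0,∞). (ii) If V < v_th∞(λ), then (0,0) is a global minimizer of F∞ over {0,1,…,B}×[0,∞), i.e., F∞(t,S_M) ≥ V for all such (t,S_M). -/

import Mathlib

/-- Coordinated myopic cost in the limit `S_A = ∞`. -/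
noncomputable def Finf (th lam V : ℝ) (t : ℕ) (SM : ℝ) : ℝ :=
  V / (1 + V * (t : ℝ) * SM) + lam * (t : ℝ) * (1 + th * SM)

/-- The `S_A = ∞` threshold `v_th∞(λ)`. -/
noncomputable def vthinf (th lam : ℝ) : ℝ :=
  Real.sqrt (lam * th) + lam / 2 +
    Real.sqrt lam * Real.sqrt (Real.sqrt (lam * th) + lam / 4)

/-- Pointwise AM–GM bound. -/
lemma amgm_aux (V x s : ℝ) (hV : 0 < V) (hx : 0 < x) (hs : 0 ≤ s) :
    2 * s ≤ V / x + s ^ 2 * x / V := by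
  rw [div_add_div _ _ hx.ne' hV.ne', le_div_iff₀ (by positivity)]
  nlinarith [sq_nonneg (V - s * x)]

/-- Lower bound for `t ≥ 1`. -/
lemma finf_lb (th lam V : ℝ) (hth : 0 < th) (hlam : 0 < lam) (hV : 0 < V)
    (t : ℕ) (ht : 1 ≤ t) (SM : ℝ) (hSM : 0 ≤ SM) :
    2 * Real.sqrt (lam * th) - lam * th / V + lam * t ≤ Finf th lam V t SM := by
  set s := Real.sqrt (lam * th) with hs
  have hs2 : s ^ 2 = lam * th := Real.sq_sqrt (by positivity)
  have hs0 : 0 ≤ s := Real.sqrt_nonneg _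
  have htR : (1 : ℝ) ≤ (t : ℝ) := by exact_mod_cast ht
  have hx : 0 < 1 + V * (t : ℝ) * SM := by positivity
  have key : Finf th lam V t SM =
      V / (1 + V * (t : ℝ) * SM) + s ^ 2 * (1 + V * (t : ℝ) * SM) / V
        - s ^ 2 / V + lam * t := by
    unfold Finf
    rw [hs2]
    field_simp
    ring
  have h := amgm_aux V (1 + V * (t : ℝ) * SM) s hV hx hs0
  have hsv : s ^ 2 / V = lam * th / V := by rw [hs2]
  linarith [h, key.le, key.ge, hsv.le, hsv.ge]

/-- Value at the candidate minimizer. -/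
lemma finf_val (th lam V : ℝ) (hth : 0 < th) (hlam : 0 < lam) (hV : 0 < V) :
    Finf th lam V 1 (1 / Real.sqrt (lam * th) - 1 / V) =
      2 * Real.sqrt (lam * th) + lam - lam * th / V := by
  set s := Real.sqrt (lam * th) with hs
  have hs2 : s ^ 2 = lam * th := Real.sq_sqrt (by positivity)
  have hs0 : 0 < s := Real.sqrt_pos.2 (by positivity)
  unfold Finf
  push_cast
  have h1 : 1 + V * 1 * (1 / s - 1 / V) = V / s := by field_simp; ring
  have h2 : V / (V / s) = s := by
    rw [div_div_eq_mul_div, mul_comm, mul_div_assoc, div_self hV.ne', mul_one]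
  rw [h1, h2]
  field_simp
  linear_combination (-V) * hs2

/-- Lower bound `V ≤ Finf` for `t ≥ 1` when `V² ≤ λθ`. -/
lemma finf_lb0 (th lam V : ℝ) (hth : 0 < th) (hlam : 0 < lam) (hV : 0 < V)
    (hV2 : V ^ 2 ≤ lam * th)
    (t : ℕ) (ht : 1 ≤ t) (SM : ℝ) (hSM : 0 ≤ SM) :
    V ≤ Finf th lam V t SM := by
  have htR : (1 : ℝ) ≤ (t : ℝ) := by exact_mod_cast ht
  have hx : 0 < 1 + V * (t : ℝ) * SM := by positivity
  rw [← sub_nonneg]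
  have key : Finf th lam V t SM - V =
      (V + lam * (t : ℝ) * (1 + th * SM) * (1 + V * (t : ℝ) * SM)
        - V * (1 + V * (t : ℝ) * SM)) / (1 + V * (t : ℝ) * SM) := by
    unfold Finf
    field_simp
  rw [key]
  apply div_nonneg _ hx.le
  have h1 : 0 ≤ (t : ℝ) * SM * (lam * th - V ^ 2) :=
    mul_nonneg (mul_nonneg (by linarith) hSM) (by linarith)
  have e : V + lam * (t : ℝ) * (1 + th * SM) * (1 + V * (t : ℝ) * SM)
      - V * (1 + V * (t : ℝ) * SM)
      = lam * (t : ℝ) + lam * V * (t : ℝ) ^ 2 * SM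
        + lam * th * V * (t : ℝ) ^ 2 * SM ^ 2
        + (t : ℝ) * SM * (lam * th - V ^ 2) := by ring
  rw [e]
  have h2 : 0 ≤ lam * V * (t : ℝ) ^ 2 * SM := by positivity
  have h3 : 0 ≤ lam * th * V * (t : ℝ) ^ 2 * SM ^ 2 := by positivity
  have h4 : 0 ≤ lam * (t : ℝ) := by positivity
  linarith

set_option maxHeartbeats 1000000 in
/-- for `0 < λ ≤ 1/(1+√θ)²`:
(i) if `V > v_th∞(λ)`, then `(1, 1/√(λθ) − 1/V)` globally minimizes `F∞`
over `{0,…,B}×[0,∞)`;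
(ii) if `V < v_th∞(λ)`, then `(0,0)` does, i.e. `F∞(t,S_M) ≥ V`. -/
theorem stmt_5 (th lam V : ℝ) (hth : 0 < th) (hlam : 0 < lam)
    (hle : lam ≤ 1 / (1 + Real.sqrt th) ^ 2)
    (B : ℕ) (hB : 1 ≤ B) (hV0 : 0 < V) (hV1 : V ≤ 1) :
    (V > vthinf th lam →
      ∀ t : ℕ, t ≤ B → ∀ SM : ℝ, 0 ≤ SM →
        Finf th lam V t SM ≥ Finf th lam V 1 (1 / Real.sqrt (lam * th) - 1 / V)) ∧
    (V < vthinf th lam →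
      ∀ t : ℕ, t ≤ B → ∀ SM : ℝ, 0 ≤ SM → Finf th lam V t SM ≥ V) := by
  set s := Real.sqrt (lam * th) with hs
  set q := Real.sqrt lam * Real.sqrt (s + lam / 4) with hqdef
  have hs2 : s ^ 2 = lam * th := Real.sq_sqrt (by positivity)
  have hs0 : 0 < s := Real.sqrt_pos.2 (by positivity)
  have hqnn : 0 ≤ q := by positivity
  have hq2 : q ^ 2 = lam * s + lam ^ 2 / 4 := by
    rw [hqdef, mul_pow, Real.sq_sqrt hlam.le, Real.sq_sqrt (by positivity)]
    ring
  have hq : lam / 2 ≤ q := by nlinarith [hq2, hqnn, hs0, hlam]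
  have hvth : vthinf th lam = s + lam / 2 + q := rfl
  constructor
  · -- case V > vthinf
    intro hgt t ht SM hSM
    rw [hvth] at hgt
    rw [ge_iff_le, finf_val th lam V hth hlam hV0, ← hs]
    have key : lam * V ≤ (V - s) ^ 2 := by
      nlinarith [mul_pos (by linarith : 0 < V - s - lam / 2 - q)
        (by linarith : 0 < V - s - lam / 2 + q), hq2]
    rcases Nat.eq_zero_or_pos t with h0 | h1
    · subst h0
      have hF : Finf th lam V 0 SM = V := by
        unfold Finf; norm_num
      rw [hF]
      have h2 : 2 * s + lam - V ≤ lam * th / V := by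
        rw [le_div_iff₀ hV0]
        nlinarith [key, hs2]
      linarith
    · have h3 := finf_lb th lam V hth hlam hV0 t h1 SM hSM
      have htR : (1 : ℝ) ≤ (t : ℝ) := by exact_mod_cast h1
      nlinarith [h3, hlam]
  · -- case V < vthinf
    intro hlt t ht SM hSM
    rw [hvth] at hlt
    rcases Nat.eq_zero_or_pos t with h0 | h1
    · subst h0
      have hF : Finf th lam V 0 SM = V := by
        unfold Finf; norm_num
      rw [ge_iff_le, hF]
    · rcases le_or_gt V s with hVs | hVs
      · exact finf_lb0 th lam V hth hlam hV0 (by nlinarith [hs2, hs0]) t h1 SM hSM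
      · have key : (V - s) ^ 2 ≤ lam * V := by
          nlinarith [mul_nonneg (by linarith : (0:ℝ) ≤ s + lam / 2 + q - V)
            (by linarith : (0:ℝ) ≤ V - s + q - lam / 2), hq2]
        have h3 := finf_lb th lam V hth hlam hV0 t h1 SM hSM
        have htR : (1 : ℝ) ≤ (t : ℝ) := by exact_mod_cast h1
        have h2 : lam * th / V ≤ 2 * s + lam - V := by
          rw [div_le_iff₀ hV0]
          nlinarith [key, hs2]
        rw [ge_iff_le]
        rw [← hs] at h3
        nlinarith [h3, hlam]
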